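/- Fix $n \geq 2$, a Borel set $K \subseteq \mathbb{R}^n$ with $0 \in K$, a positive Borel measure $\mu$ on $\mathbb{R}^n$, and a function $h : (0,\infty) \to (0,\infty)$ with constants $M > 0$, $c > 4$ such that $\int_0^{c\epsilon} h(r)/r^{n-1}\, dr \leq M\, h(\epsilon)/\epsilon^{n-2}$ for all $\epsilon \leq \epsilon_1$. Choose $\gamma > 1$, $p > 1$ with $c = 2\gamma(1+p)$, and suppose there are $A, B > 0$ and $\epsilon_0 > c\,\epsilon_1$ such that $\mu(K \cap \mathbb{B}(0,\epsilon)) \geq A h(\epsilon)$ for $\epsilon < \epsilon_0$ and $\mu(K \cap \mathbb{B}(x,\epsilon)) \leq B h(\epsilon)$ for all $x \in K$, $\epsilon < \epsilon_0$. Write $K_\epsilon = K \cap \mathbb{B}(0,\epsilon)$ and define $f_\epsilon(w) = \frac{1}{\mu(K_\epsilon)} \int_{K_\epsilon} g(|x - w|)\, d\mu(x)$. Then for every $w \in \mathbb{B}(0,1) \setminus \{0\}$ with $|w| \leq p\epsilon$ and every $\epsilon < \epsilon_1$, one has $f_\epsilon(w) \leq g(|w|) + \frac{(2\gamma p)^{n-2}\max\{1,n-2\}\,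 B M}{A\, |w|^{n-2}}$. -/

import Mathlib

open MeasureTheory Metric Filter Set ENNReal Topology

noncomputable section

/-- Euclidean space `ℝⁿ`. -/
abbrev Eucl (n : ℕ) := EuclideanSpace ℝ (Fin n)

/-- The kernel `g : (0,∞) → ℝ`, `g(r) = -log r` if `n = 2` and `g(r) = r^{2-n}`
if `n > 2`. -/
noncomputable def ker (n : ℕ) (r : ℝ) : ℝ :=
  if n = 2 then -Real.log r else r ^ ((2 : ℝ) - n)



lemma ker_anti {n : ℕ} (hn : 2 ≤ n) {a b : ℝ} (ha : 0 < a) (hab : a ≤ b) :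
    ker n b ≤ ker n a := by
  unfold _root_.ker
  split_ifs with hh
  · exact neg_le_neg (Real.log_le_log ha hab)
  · refine Real.rpow_le_rpow_of_nonpos ha hab ?_
    have : (2:ℝ) ≤ n := by exact_mod_cast hn
    linarith

lemma ker_nonneg {n : ℕ} {r : ℝ} (h0 : 0 ≤ r) (h1 : r ≤ 1) : 0 ≤ ker n r := by
  unfold _root_.ker
  split_ifs with hh
  · simpa using Real.log_nonpos h0 h1
  · exact Real.rpow_nonneg h0 _

lemma ker_zero {n : ℕ} (hn : 2 ≤ n) : ker n 0 = 0 := by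
  unfold _root_.ker
  split_ifs with hh
  · simp
  · rw [Real.zero_rpow]
    have h3 : 2 < n := lt_of_le_of_ne hn (Ne.symm hh)
    have : (2:ℝ) < n := by exact_mod_cast h3
    linarith

lemma ftc {n : ℕ} (hn : 2 ≤ n) {a b : ℝ} (ha : 0 < a) (hab : a ≤ b) :
    ∫ s in a..b, (max 1 ((n:ℝ) - 2) * s ^ ((1:ℝ) - n)) = ker n a - ker n b := by
  have hb : 0 < b := lt_of_lt_of_le ha hab
  rcases eq_or_lt_of_le hn with h2 | h3
  · subst h2
    have hcg : ∀ s ∈ uIcc a b, max 1 (((2:ℕ):ℝ) - 2) * s ^ ((1:ℝ) - (2:ℕ)) = s⁻¹ := by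
      intro s hs
      rw [show ((1:ℝ) - (2:ℕ)) = -1 by push_cast; norm_num, Real.rpow_neg_one]
      norm_num
    rw [intervalIntegral.integral_congr hcg, integral_inv_of_pos ha hb]
    rw [Real.log_div (ne_of_gt hb) (ne_of_gt ha)]
    simp only [_root_.ker, if_pos, if_true, reduceIte]
    ring
  · have hn3 : (3:ℝ) ≤ n := by exact_mod_cast h3
    have hne : (1:ℝ) - n ≠ -1 := by intro hcon; linarith
    have h0 : (0:ℝ) ∉ uIcc a b := by
      rw [uIcc_of_le hab]
      intro hcon
      exact absurd hcon.1 (not_le.mpr ha)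
    rw [intervalIntegral.integral_const_mul, integral_rpow (Or.inr ⟨hne, h0⟩)]
    have hmax : max 1 ((n:ℝ) - 2) = (n:ℝ) - 2 := max_eq_right (by linarith)
    simp only [_root_.ker, if_neg (show ¬ n = 2 by omega)]
    rw [hmax]
    rw [show (1:ℝ) - n + 1 = 2 - n by ring]
    have hne3 : (2:ℝ) - n ≠ 0 := by intro hcon; linarith
    field_simp
    ring

lemma ker_scale {n : ℕ} (hn : 2 ≤ n) {d r0 : ℝ} (hd : 0 < d) (hr : 0 < r0) :
    (2:ℝ)^(n-2) * (ker n (2*d) - ker n (2*r0)) = ker n d - ker n r0 := by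
  rcases eq_or_lt_of_le hn with h2 | h3
  · subst h2
    simp only [_root_.ker, if_pos rfl, Nat.sub_self, pow_zero, one_mul]
    rw [Real.log_mul two_ne_zero (ne_of_gt hd), Real.log_mul two_ne_zero (ne_of_gt hr)]
    simp only [reduceIte]
    ring
  · simp only [_root_.ker, if_neg (show ¬ n = 2 by omega)]
    have hcast : ((n - 2 : ℕ) : ℝ) = (n:ℝ) - 2 := by
      push_cast [Nat.cast_sub hn]; ring
    have hp : (2:ℝ)^(n-2) = (2:ℝ) ^ ((n:ℝ) - 2) := by
      rw [← Real.rpow_natCast 2 (n-2), hcast]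
    rw [Real.mul_rpow (by norm_num) (le_of_lt hd), Real.mul_rpow (by norm_num) (le_of_lt hr), hp]
    have h1 : (2:ℝ) ^ ((n:ℝ) - 2) * (2:ℝ) ^ ((2:ℝ) - n) = 1 := by
      rw [← Real.rpow_add (by norm_num)]
      norm_num
    linear_combination (d ^ ((2:ℝ) - n) - r0 ^ ((2:ℝ) - n)) * h1

lemma lint_Ioo {n : ℕ} (hn : 2 ≤ n) {d r0 : ℝ} (hd : 0 < d) (hdr : d ≤ r0) :
    ∫⁻ s in Ioo (2*d) (2*r0), ENNReal.ofReal (max 1 ((n:ℝ)-2) * 2^(n-2) * s ^ ((1:ℝ) - n)) =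
      ENNReal.ofReal (ker n d - ker n r0) := by
  have h2d : 0 < 2*d := by linarith
  have h2r : 2*d ≤ 2*r0 := by linarith
  have hcont : ContinuousOn (fun s : ℝ => max 1 ((n:ℝ)-2) * 2^(n-2) * s ^ ((1:ℝ) - n))
      (Icc (2*d) (2*r0)) := by
    apply ContinuousOn.mul continuousOn_const
    apply ContinuousOn.rpow_const continuousOn_id
    intro s hs
    exact Or.inl (ne_of_gt (lt_of_lt_of_le h2d hs.1))
  have hInt : IntegrableOn (fun s : ℝ => max 1 ((n:ℝ)-2) * 2^(n-2) * s ^ ((1:ℝ) - n))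
      (Ioc (2*d) (2*r0)) :=
    (hcont.integrableOn_Icc).mono_set Ioc_subset_Icc_self
  have hnn : 0 ≤ᵐ[volume.restrict (Ioc (2*d) (2*r0))]
      fun s : ℝ => max 1 ((n:ℝ)-2) * 2^(n-2) * s ^ ((1:ℝ) - n) := by
    filter_upwards [ae_restrict_mem measurableSet_Ioc] with s hs
    have hs0 : (0:ℝ) ≤ s := le_of_lt (lt_trans h2d hs.1)
    have : (0:ℝ) ≤ max 1 ((n:ℝ)-2) := le_trans zero_le_one (le_max_left _ _)
    positivity
  rw [setLIntegral_congr Ioo_ae_eq_Ioc, ← ofReal_integral_eq_lintegral_ofReal hInt hnn,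
    ← intervalIntegral.integral_of_le h2r]
  congr 1
  have hcg : ∀ s ∈ uIcc (2*d) (2*r0),
      max 1 ((n:ℝ)-2) * 2^(n-2) * s ^ ((1:ℝ) - n)
        = (2:ℝ)^(n-2) * (max 1 ((n:ℝ)-2) * s ^ ((1:ℝ) - n)) := fun s _ => by ring
  rw [intervalIntegral.integral_congr hcg, intervalIntegral.integral_const_mul,
    ftc hn h2d h2r]
  exact ker_scale hn hd (lt_of_lt_of_le hd hdr)

lemma pointwise_bound {E : Type*} [NormedAddCommGroup E] {n : ℕ} (hn : 2 ≤ n) (w x : E)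
    (h0 : 0 < ‖w‖) (h1 : ‖w‖ < 1) :
    ENNReal.ofReal (ker n ‖x - w‖) ≤ ENNReal.ofReal (ker n ‖w‖) +
      ∫⁻ s in Ioo (0:ℝ) (2*‖w‖), (if 2 * dist x w < s
        then ENNReal.ofReal (max 1 ((n:ℝ)-2) * 2^(n-2) * s ^ ((1:ℝ) - n)) else 0) := by
  have hdn : ‖x - w‖ = dist x w := (dist_eq_norm x w).symm
  set d := dist x w with hd
  have hstep1 : ENNReal.ofReal (ker n ‖x - w‖) ≤
      ENNReal.ofReal (ker n ‖w‖) + ENNReal.ofReal (ker n d - ker n ‖w‖) := by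
    rw [hdn]
    calc ENNReal.ofReal (ker n d)
        = ENNReal.ofReal (ker n ‖w‖ + (ker n d - ker n ‖w‖)) := by ring_nf
      _ ≤ _ := ENNReal.ofReal_add_le
  refine hstep1.trans (add_le_add_right ?_ _)
  by_cases hd0 : d = 0
  · have hle : ker n d - ker n ‖w‖ ≤ 0 := by
      rw [hd0, ker_zero hn]
      simpa using ker_nonneg (le_of_lt h0) (le_of_lt h1)
    rw [ENNReal.ofReal_eq_zero.mpr hle]
    exact zero_le
  by_cases hdw : ‖w‖ ≤ d
  · have hle : ker n d - ker n ‖w‖ ≤ 0 :=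
      sub_nonpos.mpr (ker_anti hn h0 hdw)
    rw [ENNReal.ofReal_eq_zero.mpr hle]
    exact zero_le
  · push_neg at hdw
    have hdpos : 0 < d := lt_of_le_of_ne dist_nonneg (Ne.symm hd0)
    calc ENNReal.ofReal (ker n d - ker n ‖w‖)
        = ∫⁻ s in Ioo (2*d) (2*‖w‖),
            ENNReal.ofReal (max 1 ((n:ℝ)-2) * 2^(n-2) * s ^ ((1:ℝ) - n)) :=
          (lint_Ioo hn hdpos (le_of_lt hdw)).symm
      _ = ∫⁻ s in Ioo (2*d) (2*‖w‖), (if 2 * d < s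
            then ENNReal.ofReal (max 1 ((n:ℝ)-2) * 2^(n-2) * s ^ ((1:ℝ) - n)) else 0) :=
          setLIntegral_congr_fun measurableSet_Ioo
            (fun s hs => (if_pos hs.1).symm)
      _ ≤ _ := lintegral_mono_set (Ioo_subset_Ioo (by linarith) le_rfl)

/-- **Case II of Step 2 of the proof of Main Theorem 1.** Fix `n ≥ 2`, a Borel set
`K ∋ 0`, a positive Borel measure `μ`, and an admissible `h` with constants `M > 0`,
`c > 4`, valid for `ε ≤ ε₁`. Choose `γ > 1`, `p > 1` with `c = 2γ(1+p)`, and let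
`A, B > 0`, `ε₀ > c ε₁` be such that `μ(K ∩ 𝔹(0,ε)) ≥ A h(ε)` and
`μ(K ∩ 𝔹(x,ε)) ≤ B h(ε)` for `x ∈ K`, `ε < ε₀`. Then, writing `K_ε = K ∩ 𝔹(0,ε)` and
`f_ε(w) = μ(K_ε)⁻¹ ∫_{K_ε} g(|x-w|) dμ(x)` (a layer-cake integral of the positive
part), for every `ε < ε₁` and `w ∈ 𝔹(0,1) \ {0}` with `|w| ≤ pε` one has
`f_ε(w) ≤ g(|w|) + (2γp)^{n-2} max{1,n-2} B M / (A |w|^{n-2})`. -/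
theorem f_eps_bound_case_II {n : ℕ} (hn : 2 ≤ n)
    (K : Set (Eucl n)) (hK : MeasurableSet K) (h0K : (0 : Eucl n) ∈ K)
    (μ : Measure (Eucl n))
    (h : ℝ → ℝ) (hpos : ∀ r : ℝ, 0 < r → 0 < h r)
    (M c : ℝ) (hM : 0 < M) (hc : 4 < c)
    (ε₁ : ℝ) (hε₁ : 0 < ε₁)
    (hint : ∀ ε : ℝ, 0 < ε → ε ≤ ε₁ →
      ∫⁻ r in Ioo (0 : ℝ) (c * ε), ENNReal.ofReal (h r / r ^ (n - 1)) ≤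
        ENNReal.ofReal (M * (h ε / ε ^ (n - 2))))
    (γ p : ℝ) (hγ : 1 < γ) (hp : 1 < p) (hcγp : c = 2 * γ * (1 + p))
    (A B ε₀ : ℝ) (hA : 0 < A) (hB : 0 < B) (hε₀ : c * ε₁ < ε₀)
    (h1 : ∀ ε : ℝ, 0 < ε → ε < ε₀ → ENNReal.ofReal (A * h ε) ≤ μ (K ∩ ball 0 ε))
    (h2 : ∀ x ∈ K, ∀ ε : ℝ, 0 < ε → ε < ε₀ → μ (K ∩ ball x ε) ≤ ENNReal.ofReal (B * h ε)) :
    ∀ ε : ℝ, 0 < ε → ε < ε₁ → ∀ w : Eucl n, w ∈ ball (0 : Eucl n) 1 → w ≠ 0 →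
      ‖w‖ ≤ p * ε →
      (μ (K ∩ ball 0 ε))⁻¹ *
          ∫⁻ x in K ∩ ball 0 ε, ENNReal.ofReal (ker n ‖x - w‖) ∂μ ≤
        ENNReal.ofReal (ker n ‖w‖ +
          (2 * γ * p) ^ (n - 2) * max 1 ((n : ℝ) - 2) * B * M / (A * ‖w‖ ^ (n - 2))) := by
  classical
  intro ε hε hεε₁ w hw1 hw0 hwpε
  have hr0pos : 0 < ‖w‖ := norm_pos_iff.mpr hw0
  have hr01 : ‖w‖ < 1 := mem_ball_zero_iff.mp hw1
  have hγ0 : (0:ℝ) < γ := lt_trans one_pos hγ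
  have hp0 : (0:ℝ) < p := lt_trans one_pos hp
  have hc0 : (0:ℝ) < c := by linarith
  have h2pc : 2 * p < c := by nlinarith
  have hεε₀ : ε < ε₀ := by nlinarith
  have hhε : 0 < h ε := hpos ε hε
  have hμK_lb : ENNReal.ofReal (A * h ε) ≤ μ (K ∩ ball 0 ε) := h1 ε hε hεε₀
  have hμK0 : μ (K ∩ ball 0 ε) ≠ 0 := by
    intro h0'
    rw [h0', le_zero_iff, ENNReal.ofReal_eq_zero] at hμK_lb
    nlinarith
  by_cases htop : μ (K ∩ ball 0 ε) = ⊤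
  · rw [htop]
    simp
  haveI hfin : IsFiniteMeasure (μ.restrict (K ∩ ball 0 ε)) :=
    ⟨by rw [Measure.restrict_apply_univ]; exact lt_top_iff_ne_top.mpr htop⟩
  -- notation
  set S := K ∩ ball (0:Eucl n) ε with hS
  set Xr : ℝ := (2 * γ * p) ^ (n - 2) * max 1 ((n : ℝ) - 2) * B * M / (A * ‖w‖ ^ (n - 2))
    with hXr
  have hXrnn : 0 ≤ Xr := by
    rw [hXr]
    have : (0:ℝ) ≤ max 1 ((n : ℝ) - 2) := le_trans zero_le_one (le_max_left _ _)
    positivity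
  -- Step 1: pointwise bound and splitting
  have hI : ∫⁻ x in S, ENNReal.ofReal (ker n ‖x - w‖) ∂μ ≤
      ENNReal.ofReal (ker n ‖w‖) * μ S +
        ∫⁻ x in S, (∫⁻ s in Ioo (0:ℝ) (2*‖w‖), (if 2 * dist x w < s
          then ENNReal.ofReal (max 1 ((n:ℝ)-2) * 2^(n-2) * s ^ ((1:ℝ) - n)) else 0)) ∂μ := by
    calc ∫⁻ x in S, ENNReal.ofReal (ker n ‖x - w‖) ∂μ
        ≤ ∫⁻ x in S, (ENNReal.ofReal (ker n ‖w‖) +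
            ∫⁻ s in Ioo (0:ℝ) (2*‖w‖), (if 2 * dist x w < s
              then ENNReal.ofReal (max 1 ((n:ℝ)-2) * 2^(n-2) * s ^ ((1:ℝ) - n)) else 0)) ∂μ :=
          lintegral_mono fun x => pointwise_bound hn w x hr0pos hr01
      _ = _ := by
          rw [lintegral_add_left measurable_const, setLIntegral_const]
  -- Step 2: Tonelli
  have hswap : ∫⁻ x in S, (∫⁻ s in Ioo (0:ℝ) (2*‖w‖), (if 2 * dist x w < s
        then ENNReal.ofReal (max 1 ((n:ℝ)-2) * 2^(n-2) * s ^ ((1:ℝ) - n)) else 0)) ∂μ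
      = ∫⁻ s in Ioo (0:ℝ) (2*‖w‖), (∫⁻ x in S, (if 2 * dist x w < s
        then ENNReal.ofReal (max 1 ((n:ℝ)-2) * 2^(n-2) * s ^ ((1:ℝ) - n)) else 0) ∂μ) := by
    apply lintegral_lintegral_swap
    apply Measurable.aemeasurable
    apply Measurable.ite
    · exact (isOpen_lt (continuous_const.mul (continuous_fst.dist continuous_const))
        continuous_snd).measurableSet
    · exact Measurable.ennreal_ofReal (by fun_prop)
    · exact measurable_const
  -- Step 3: inner bound
  have hball : ∀ s : ℝ, s ∈ Ioo (0:ℝ) (2*‖w‖) → μ (K ∩ ball w (s/2)) ≤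
      ENNReal.ofReal (B * h s) := by
    intro s hs
    rcases (K ∩ ball w (s/2)).eq_empty_or_nonempty with hemp | ⟨x₀, hx₀K, hx₀b⟩
    · rw [hemp]; simp
    · have hsub : K ∩ ball w (s/2) ⊆ K ∩ ball x₀ s := by
        rintro y ⟨hyK, hyb⟩
        refine ⟨hyK, mem_ball.mpr ?_⟩
        have h1' := mem_ball.mp hyb
        have h2' := mem_ball.mp hx₀b
        have := dist_triangle y w x₀
        have hwx : dist w x₀ = dist x₀ w := dist_comm w x₀
        linarith
      have hsε₀ : s < ε₀ := by
        have := hs.2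
        nlinarith [hwpε]
      exact le_trans (measure_mono hsub) (h2 x₀ hx₀K s hs.1 hsε₀)
  have hinner : ∀ s : ℝ, s ∈ Ioo (0:ℝ) (2*‖w‖) →
      (∫⁻ x in S, (if 2 * dist x w < s
        then ENNReal.ofReal (max 1 ((n:ℝ)-2) * 2^(n-2) * s ^ ((1:ℝ) - n)) else 0) ∂μ) ≤
      ENNReal.ofReal (max 1 ((n:ℝ)-2) * 2^(n-2) * B) * ENNReal.ofReal (h s / s ^ (n-1)) := by
    intro s hs
    have hs0 : 0 < s := hs.1
    have hite : ∀ x : Eucl n, (if 2 * dist x w < s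
        then ENNReal.ofReal (max 1 ((n:ℝ)-2) * 2^(n-2) * s ^ ((1:ℝ) - n)) else 0)
        = (ball w (s/2)).indicator
            (fun _ => ENNReal.ofReal (max 1 ((n:ℝ)-2) * 2^(n-2) * s ^ ((1:ℝ) - n))) x := by
      intro x
      rw [indicator_apply]
      congr 1
      rw [eq_iff_iff, mem_ball]
      constructor <;> intro <;> linarith
    calc (∫⁻ x in S, (if 2 * dist x w < s
          then ENNReal.ofReal (max 1 ((n:ℝ)-2) * 2^(n-2) * s ^ ((1:ℝ) - n)) else 0) ∂μ)
        = ∫⁻ x in S, (ball w (s/2)).indicator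
            (fun _ => ENNReal.ofReal (max 1 ((n:ℝ)-2) * 2^(n-2) * s ^ ((1:ℝ) - n))) x ∂μ :=
          lintegral_congr fun x => hite x
      _ = ENNReal.ofReal (max 1 ((n:ℝ)-2) * 2^(n-2) * s ^ ((1:ℝ) - n)) *
            (μ.restrict S) (ball w (s/2)) := by
          rw [lintegral_indicator measurableSet_ball, setLIntegral_const]
      _ ≤ ENNReal.ofReal (max 1 ((n:ℝ)-2) * 2^(n-2) * s ^ ((1:ℝ) - n)) *
            ENNReal.ofReal (B * h s) := by
          apply mul_le_mul_right
          rw [Measure.restrict_apply measurableSet_ball]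
          refine le_trans (measure_mono ?_) (hball s hs)
          rintro y ⟨hyb, hyK, _⟩
          exact ⟨hyK, hyb⟩
      _ = ENNReal.ofReal (max 1 ((n:ℝ)-2) * 2^(n-2) * B) * ENNReal.ofReal (h s / s ^ (n-1)) := by
          have hmnn : (0:ℝ) ≤ max 1 ((n : ℝ) - 2) := le_trans zero_le_one (le_max_left _ _)
          have hrw : s ^ ((1:ℝ) - n) = (s ^ (n-1 : ℕ))⁻¹ := by
            rw [← Real.rpow_natCast s (n-1), ← Real.rpow_neg (le_of_lt hs0)]
            congr 1
            push_cast [Nat.cast_sub (by omega : 1 ≤ n)]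
            ring
          rw [← ENNReal.ofReal_mul (by positivity), ← ENNReal.ofReal_mul (by positivity)]
          congr 1
          rw [hrw]
          field_simp
  -- Step 4: the h-integral bound
  have hJ : ∫⁻ x in S, (∫⁻ s in Ioo (0:ℝ) (2*‖w‖), (if 2 * dist x w < s
        then ENNReal.ofReal (max 1 ((n:ℝ)-2) * 2^(n-2) * s ^ ((1:ℝ) - n)) else 0)) ∂μ ≤
      ENNReal.ofReal (A * h ε) * ENNReal.ofReal Xr := by
    rw [hswap]
    calc ∫⁻ s in Ioo (0:ℝ) (2*‖w‖), (∫⁻ x in S, (if 2 * dist x w < s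
          then ENNReal.ofReal (max 1 ((n:ℝ)-2) * 2^(n-2) * s ^ ((1:ℝ) - n)) else 0) ∂μ)
        ≤ ∫⁻ s in Ioo (0:ℝ) (2*‖w‖),
            ENNReal.ofReal (max 1 ((n:ℝ)-2) * 2^(n-2) * B) * ENNReal.ofReal (h s / s ^ (n-1)) :=
          setLIntegral_mono' measurableSet_Ioo hinner
      _ = ENNReal.ofReal (max 1 ((n:ℝ)-2) * 2^(n-2) * B) *
            ∫⁻ s in Ioo (0:ℝ) (2*‖w‖), ENNReal.ofReal (h s / s ^ (n-1)) :=
          lintegral_const_mul' _ _ ENNReal.ofReal_ne_top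
      _ ≤ ENNReal.ofReal (max 1 ((n:ℝ)-2) * 2^(n-2) * B) *
            ∫⁻ s in Ioo (0:ℝ) (c*ε), ENNReal.ofReal (h s / s ^ (n-1)) := by
          apply mul_le_mul_right
          apply lintegral_mono_set
          apply Ioo_subset_Ioo le_rfl
          nlinarith [hwpε]
      _ ≤ ENNReal.ofReal (max 1 ((n:ℝ)-2) * 2^(n-2) * B) *
            ENNReal.ofReal (M * (h ε / ε ^ (n - 2))) :=
          mul_le_mul_right (hint ε hε (le_of_lt hεε₁)) _
      _ ≤ ENNReal.ofReal (A * h ε) * ENNReal.ofReal Xr := by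
          rw [← ENNReal.ofReal_mul (by
            have : (0:ℝ) ≤ max 1 ((n : ℝ) - 2) := le_trans zero_le_one (le_max_left _ _)
            positivity), ← ENNReal.ofReal_mul (by positivity)]
          apply ENNReal.ofReal_le_ofReal
          -- real inequality
          have hmnn : (1:ℝ) ≤ max 1 ((n : ℝ) - 2) := le_max_left _ _
          have hkey : ‖w‖ ^ (n-2) ≤ (γ * p * ε) ^ (n-2) := by
            apply pow_le_pow_left₀ (norm_nonneg w)
            nlinarith
          have hC : (0:ℝ) ≤ max 1 ((n:ℝ)-2) * 2^(n-2) * B * M * h ε := by positivity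
          have hkey' : ‖w‖ ^ (n-2) ≤ γ^(n-2) * p^(n-2) * ε^(n-2) := by
            calc ‖w‖ ^ (n-2) ≤ (γ * p * ε) ^ (n-2) := hkey
              _ = γ^(n-2) * p^(n-2) * ε^(n-2) := by rw [mul_pow, mul_pow]
          have lhs_eq : max 1 ((n:ℝ)-2) * 2^(n-2) * B * (M * (h ε / ε^(n-2)))
              = (max 1 ((n:ℝ)-2) * 2^(n-2) * B * M * h ε) / ε^(n-2) := by ring
          have target_eq : A * h ε * Xr
              = (h ε * (2^(n-2)*γ^(n-2)*p^(n-2)*(max 1 ((n:ℝ)-2))*B*M)) / ‖w‖^(n-2) := by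
            rw [hXr, mul_pow, mul_pow]
            field_simp
          rw [lhs_eq, target_eq, div_le_div_iff₀ (pow_pos hε _) (pow_pos hr0pos _)]
          calc max 1 ((n:ℝ)-2) * 2^(n-2) * B * M * h ε * ‖w‖^(n-2)
              ≤ max 1 ((n:ℝ)-2) * 2^(n-2) * B * M * h ε * (γ^(n-2)*p^(n-2)*ε^(n-2)) :=
                mul_le_mul_of_nonneg_left hkey' hC
            _ = h ε * (2^(n-2)*γ^(n-2)*p^(n-2)*(max 1 ((n:ℝ)-2))*B*M) * ε^(n-2) := by ring
  have hker_nn : 0 ≤ ker n ‖w‖ := ker_nonneg (norm_nonneg w) (le_of_lt hr01)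
  calc (μ S)⁻¹ * ∫⁻ x in S, ENNReal.ofReal (ker n ‖x - w‖) ∂μ
      ≤ (μ S)⁻¹ * (ENNReal.ofReal (ker n ‖w‖) * μ S +
          ENNReal.ofReal (A * h ε) * ENNReal.ofReal Xr) :=
        mul_le_mul_right (hI.trans (add_le_add_right hJ _)) _
    _ = (μ S)⁻¹ * (ENNReal.ofReal (ker n ‖w‖) * μ S) +
          (μ S)⁻¹ * (ENNReal.ofReal (A * h ε) * ENNReal.ofReal Xr) := mul_add _ _ _
    _ ≤ ENNReal.ofReal (ker n ‖w‖) + ENNReal.ofReal Xr := by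
        apply add_le_add
        · apply le_of_eq
          rw [mul_comm (ENNReal.ofReal (ker n ‖w‖)) (μ S), ← mul_assoc,
            ENNReal.inv_mul_cancel hμK0 htop, one_mul]
        · calc (μ S)⁻¹ * (ENNReal.ofReal (A * h ε) * ENNReal.ofReal Xr)
              ≤ (μ S)⁻¹ * (μ S * ENNReal.ofReal Xr) :=
                mul_le_mul_right (mul_le_mul_left hμK_lb _) _
            _ = ENNReal.ofReal Xr := by
                rw [← mul_assoc, ENNReal.inv_mul_cancel hμK0 htop, one_mul]
    _ = ENNReal.ofReal (ker n ‖w‖ + Xr) := (ENNReal.ofReal_add hker_nn hXrnn).symm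

end
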